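/- Let φ := ∑_{i=1}^{6} v₂ᵢ·1_{I_i} where v₂ := (1, (3+√13)/2, −(5+√13)/2, −(5+√13)/2, (3+√13)/2, 1). Then Pφ(x) = λ₂·φ(x) for every x ∈ [0,1)∖(C ∪ S'), where λ₂ := −(1+√13)/6. -/

import Mathlib

open Set

/-- The successive slopes `2/3, 1/3, 1/2, 1/2, 2/3, 1/3, 1/3, 2/3, 1/2, 1/2, 1/3, 2/3`. -/
noncomputable def pwVals : Fin 12 → ℝ :=
  ![2/3, 1/3, 1/2, 1/2, 2/3, 1/3, 1/3, 2/3, 1/2, 1/2, 1/3, 2/3]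

/-- The `2`-periodic step function `τ̇` taking the value `pwVals (k-1)` on
`((k−1)/6, k/6)`, `k = 1, …, 12` (and extended `2`-periodically). -/
noncomputable def pwTaudot (x : ℝ) : ℝ :=
  pwVals ⟨(⌊6 * x⌋ % 12).toNat, by
    have h1 : (0:ℤ) ≤ ⌊6 * x⌋ % 12 := Int.emod_nonneg _ (by norm_num)
    have h2 : ⌊6 * x⌋ % 12 < 12 := Int.emod_lt_of_pos _ (by norm_num)
    omega⟩

/-- `τ(x) = ∫₀ˣ τ̇(u) du`. -/
noncomputable def pwTau : ℝ → ℝ := fun x => ∫ u in (0:ℝ)..x, pwTaudot u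

-- measurability and integrability
lemma pwTaudot_measurable : Measurable pwTaudot := by
  have : pwTaudot = (fun n : ℤ => pwVals ⟨(n % 12).toNat, by
      have h1 : (0:ℤ) ≤ n % 12 := Int.emod_nonneg _ (by norm_num)
      have h2 : n % 12 < 12 := Int.emod_lt_of_pos _ (by norm_num)
      omega⟩) ∘ (fun u : ℝ => ⌊6 * u⌋) := rfl
  rw [this]
  exact Measurable.of_discrete.comp (Int.measurable_floor.comp (measurable_const.mul measurable_id))

theorem cons_succ_mk {α : Type*} {m : ℕ} (x : α) (u : Fin m → α) (i : ℕ) (h : i+1 < m+1) :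
    Matrix.vecCons x u ⟨i+1, h⟩ = u ⟨i, by omega⟩ := Matrix.cons_val_succ' h x u

lemma pwVals_bound (i : Fin 12) : ‖pwVals i‖ ≤ 1 := by
  obtain ⟨v, hv⟩ := i
  interval_cases v <;>
    simp only [pwVals, cons_succ_mk, Matrix.cons_val_zero'] <;>
    rw [Real.norm_eq_abs, abs_le] <;> norm_num

lemma pwTaudot_integrable (a b : ℝ) :
    IntervalIntegrable pwTaudot MeasureTheory.volume a b := by
  rw [intervalIntegrable_iff]
  apply MeasureTheory.Integrable.mono' (g := fun _ => (1:ℝ))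
  · exact (MeasureTheory.integrableOn_const_iff (C := (1:ℝ))).mpr (Or.inr measure_Ioc_lt_top)
  · exact pwTaudot_measurable.aestronglyMeasurable
  · exact MeasureTheory.ae_of_all _ fun u => pwVals_bound _

lemma pwTaudot_eq (j : ℤ) (h0 : 0 ≤ j) (h12 : j < 12) (u : ℝ)
    (h1 : (j:ℝ)/6 ≤ u) (h2 : u < ((j:ℝ)+1)/6) :
    pwTaudot u = pwVals ⟨j.toNat, by omega⟩ := by
  have hf : ⌊6 * u⌋ = j := by
    rw [Int.floor_eq_iff]
    constructor <;> push_cast <;> linarith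
  simp only [pwTaudot]
  congr 1
  apply Fin.ext
  simp [hf, Int.emod_eq_of_lt h0 h12]

lemma tau_add (j : ℤ) (c : ℝ) (h0 : 0 ≤ j) (h12 : j < 12)
    (hc : pwVals ⟨j.toNat, by omega⟩ = c)
    (x : ℝ) (h1 : (j:ℝ)/6 ≤ x) (h2 : x ≤ ((j:ℝ)+1)/6) :
    pwTau x = pwTau ((j:ℝ)/6) + c * (x - (j:ℝ)/6) := by
  have hsplit : pwTau x = pwTau ((j:ℝ)/6) + ∫ u in ((j:ℝ)/6)..x, pwTaudot u := by
    unfold pwTau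
    rw [intervalIntegral.integral_add_adjacent_intervals (pwTaudot_integrable 0 _)
      (pwTaudot_integrable _ x)]
  rw [hsplit]
  congr 1
  have h0vol : (MeasureTheory.volume : MeasureTheory.Measure ℝ) {((j:ℝ)+1)/6} = 0 :=
    MeasureTheory.measure_singleton _
  have hae : ∀ᵐ u ∂(MeasureTheory.volume : MeasureTheory.Measure ℝ),
      u ∈ Set.uIoc ((j:ℝ)/6) x → pwTaudot u = c := by
    filter_upwards [MeasureTheory.compl_mem_ae_iff.mpr h0vol] with u hu hmem
    rw [Set.uIoc_of_le h1] at hmem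
    rw [pwTaudot_eq j h0 h12 u (le_of_lt hmem.1)
      (lt_of_le_of_ne (le_trans hmem.2 h2) (by simpa using hu))]
    exact hc
  rw [intervalIntegral.integral_congr_ae hae, intervalIntegral.integral_const, smul_eq_mul,
    mul_comm]

lemma tau_zero : pwTau 0 = 0 := intervalIntegral.integral_same

lemma tau_on (j : ℤ) (c T : ℝ) (h0 : 0 ≤ j) (h12 : j < 12)
    (hc : pwVals ⟨j.toNat, by omega⟩ = c) (hT : pwTau ((j:ℝ)/6) = T)
    (x : ℝ) (h1 : (j:ℝ)/6 ≤ x) (h2 : x ≤ ((j:ℝ)+1)/6) :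
    pwTau x = T + c * (x - (j:ℝ)/6) := by
  rw [tau_add j c h0 h12 hc x h1 h2, hT]

-- values of pwVals (0-based)
lemma pv0 : pwVals ⟨(0:ℤ).toNat, by omega⟩ = 2/3 := by
  show pwVals ⟨0, by omega⟩ = 2/3
  norm_num [pwVals, cons_succ_mk, Matrix.cons_val_zero']
lemma pv1 : pwVals ⟨(1:ℤ).toNat, by omega⟩ = 1/3 := by
  show pwVals ⟨1, by omega⟩ = 1/3
  norm_num [pwVals, cons_succ_mk, Matrix.cons_val_zero']
lemma pv2 : pwVals ⟨(2:ℤ).toNat, by omega⟩ = 1/2 := by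
  show pwVals ⟨2, by omega⟩ = 1/2
  norm_num [pwVals, cons_succ_mk, Matrix.cons_val_zero']
lemma pv3 : pwVals ⟨(3:ℤ).toNat, by omega⟩ = 1/2 := by
  show pwVals ⟨3, by omega⟩ = 1/2
  norm_num [pwVals, cons_succ_mk, Matrix.cons_val_zero']
lemma pv4 : pwVals ⟨(4:ℤ).toNat, by omega⟩ = 2/3 := by
  show pwVals ⟨4, by omega⟩ = 2/3
  norm_num [pwVals, cons_succ_mk, Matrix.cons_val_zero']
lemma pv5 : pwVals ⟨(5:ℤ).toNat, by omega⟩ = 1/3 := by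
  show pwVals ⟨5, by omega⟩ = 1/3
  norm_num [pwVals, cons_succ_mk, Matrix.cons_val_zero']
lemma pv6 : pwVals ⟨(6:ℤ).toNat, by omega⟩ = 1/3 := by
  show pwVals ⟨6, by omega⟩ = 1/3
  norm_num [pwVals, cons_succ_mk, Matrix.cons_val_zero']
lemma pv7 : pwVals ⟨(7:ℤ).toNat, by omega⟩ = 2/3 := by
  show pwVals ⟨7, by omega⟩ = 2/3
  norm_num [pwVals, cons_succ_mk, Matrix.cons_val_zero']
lemma pv8 : pwVals ⟨(8:ℤ).toNat, by omega⟩ = 1/2 := by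
  show pwVals ⟨8, by omega⟩ = 1/2
  norm_num [pwVals, cons_succ_mk, Matrix.cons_val_zero']
lemma pv9 : pwVals ⟨(9:ℤ).toNat, by omega⟩ = 1/2 := by
  show pwVals ⟨9, by omega⟩ = 1/2
  norm_num [pwVals, cons_succ_mk, Matrix.cons_val_zero']
lemma pv10 : pwVals ⟨(10:ℤ).toNat, by omega⟩ = 1/3 := by
  show pwVals ⟨10, by omega⟩ = 1/3
  norm_num [pwVals, cons_succ_mk, Matrix.cons_val_zero']
lemma pv11 : pwVals ⟨(11:ℤ).toNat, by omega⟩ = 2/3 := by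
  show pwVals ⟨11, by omega⟩ = 2/3
  norm_num [pwVals, cons_succ_mk, Matrix.cons_val_zero']

-- tau values at j/6
lemma tv0 : pwTau (0 : ℝ) = 0 := tau_zero
lemma tv1 : pwTau (1/6 : ℝ) = 1/9 := by
  have h := tau_on 0 (2/3) (0) (by norm_num) (by norm_num) pv0
    (by norm_num [tv0]) (1/6) (by norm_num) (by norm_num)
  norm_num at h
  linarith [h]
lemma tv2 : pwTau (1/3 : ℝ) = 1/6 := by
  have h := tau_on 1 (1/3) (1/9) (by norm_num) (by norm_num) pv1
    (by norm_num [tv1]) (1/3) (by norm_num) (by norm_num)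
  norm_num at h
  linarith [h]
lemma tv3 : pwTau (1/2 : ℝ) = 1/4 := by
  have h := tau_on 2 (1/2) (1/6) (by norm_num) (by norm_num) pv2
    (by norm_num [tv2]) (1/2) (by norm_num) (by norm_num)
  norm_num at h
  linarith [h]
lemma tv4 : pwTau (2/3 : ℝ) = 1/3 := by
  have h := tau_on 3 (1/2) (1/4) (by norm_num) (by norm_num) pv3
    (by norm_num [tv3]) (2/3) (by norm_num) (by norm_num)
  norm_num at h
  linarith [h]
lemma tv5 : pwTau (5/6 : ℝ) = 4/9 := by
  have h := tau_on 4 (2/3) (1/3) (by norm_num) (by norm_num) pv4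
    (by norm_num [tv4]) (5/6) (by norm_num) (by norm_num)
  norm_num at h
  linarith [h]
lemma tv6 : pwTau (1 : ℝ) = 1/2 := by
  have h := tau_on 5 (1/3) (4/9) (by norm_num) (by norm_num) pv5
    (by norm_num [tv5]) (1) (by norm_num) (by norm_num)
  norm_num at h
  linarith [h]
lemma tv7 : pwTau (7/6 : ℝ) = 5/9 := by
  have h := tau_on 6 (1/3) (1/2) (by norm_num) (by norm_num) pv6
    (by norm_num [tv6]) (7/6) (by norm_num) (by norm_num)
  norm_num at h
  linarith [h]
lemma tv8 : pwTau (4/3 : ℝ) = 2/3 := by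
  have h := tau_on 7 (2/3) (5/9) (by norm_num) (by norm_num) pv7
    (by norm_num [tv7]) (4/3) (by norm_num) (by norm_num)
  norm_num at h
  linarith [h]
lemma tv9 : pwTau (3/2 : ℝ) = 3/4 := by
  have h := tau_on 8 (1/2) (2/3) (by norm_num) (by norm_num) pv8
    (by norm_num [tv8]) (3/2) (by norm_num) (by norm_num)
  norm_num at h
  linarith [h]
lemma tv10 : pwTau (5/3 : ℝ) = 5/6 := by
  have h := tau_on 9 (1/2) (3/4) (by norm_num) (by norm_num) pv9
    (by norm_num [tv9]) (5/3) (by norm_num) (by norm_num)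
  norm_num at h
  linarith [h]
lemma tv11 : pwTau (11/6 : ℝ) = 8/9 := by
  have h := tau_on 10 (1/3) (5/6) (by norm_num) (by norm_num) pv10
    (by norm_num [tv10]) (11/6) (by norm_num) (by norm_num)
  norm_num at h
  linarith [h]
lemma tv12 : pwTau (2 : ℝ) = 1 := by
  have h := tau_on 11 (2/3) (8/9) (by norm_num) (by norm_num) pv11
    (by norm_num [tv11]) (2) (by norm_num) (by norm_num)
  norm_num at h
  linarith [h]

/-- The transfer operator `Pf(x) = τ̇(x)·f(τ(x)) + τ̇(x+1)·f(τ(x+1))`. -/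
noncomputable def pwP (f : ℝ → ℝ) : ℝ → ℝ := fun x =>
  pwTaudot x * f (pwTau x) + pwTaudot (x + 1) * f (pwTau (x + 1))

/-- The interval `I_{i+1} = (i/6, (i+1)/6)`, `i = 0, …, 5`. -/
def Iint (i : Fin 6) : Set ℝ := Ioo ((i : ℝ) / 6) (((i : ℝ) + 1) / 6)

/-- `C = {0, 1/6, 2/6, 3/6, 4/6, 5/6}`. -/
def Cset : Set ℝ := {0, 1/6, 2/6, 3/6, 4/6, 5/6}

/-- `S' = {τ(k/6) mod 1 : k = 0, …, 11}`. -/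
noncomputable def Sprime : Set ℝ := {y | ∃ k : Fin 12, y = Int.fract (pwTau ((k : ℝ) / 6))}

/-- The left eigenvector `v₂ = (1, (3+√13)/2, −(5+√13)/2, −(5+√13)/2, (3+√13)/2, 1)`. -/
noncomputable def v2vec : Fin 6 → ℝ :=
  ![1, (3 + Real.sqrt 13) / 2, -((5 + Real.sqrt 13) / 2),
    -((5 + Real.sqrt 13) / 2), (3 + Real.sqrt 13) / 2, 1]

/-- The step function `φ = ∑ᵢ v₂ᵢ·1_{I_i}`. -/
noncomputable def pwPhi : ℝ → ℝ := fun x =>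
  ∑ i : Fin 6, v2vec i * (Iint i).indicator (fun _ => (1:ℝ)) x

lemma w0 : v2vec ⟨0, by omega⟩ = 1 := by
  norm_num [v2vec, cons_succ_mk, Matrix.cons_val_zero']
lemma w1 : v2vec ⟨1, by omega⟩ = (3 + Real.sqrt 13) / 2 := by
  norm_num [v2vec, cons_succ_mk, Matrix.cons_val_zero']
lemma w2 : v2vec ⟨2, by omega⟩ = -((5 + Real.sqrt 13) / 2) := by
  norm_num [v2vec, cons_succ_mk, Matrix.cons_val_zero']
lemma w3 : v2vec ⟨3, by omega⟩ = -((5 + Real.sqrt 13) / 2) := by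
  norm_num [v2vec, cons_succ_mk, Matrix.cons_val_zero']
lemma w4 : v2vec ⟨4, by omega⟩ = (3 + Real.sqrt 13) / 2 := by
  norm_num [v2vec, cons_succ_mk, Matrix.cons_val_zero']
lemma w5 : v2vec ⟨5, by omega⟩ = 1 := by
  norm_num [v2vec, cons_succ_mk, Matrix.cons_val_zero']

lemma pwPhi_eval' (n : ℕ) (hn : n < 6) (y : ℝ) (h1 : (n:ℝ)/6 < y) (h2 : y < ((n:ℝ)+1)/6) :
    pwPhi y = v2vec ⟨n, hn⟩ := by
  unfold pwPhi
  rw [Finset.sum_eq_single (⟨n, hn⟩ : Fin 6)]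
  · rw [Set.indicator_of_mem (show y ∈ Iint ⟨n, hn⟩ from ⟨h1, h2⟩), mul_one]
  · intro j _ hj
    rw [Set.indicator_of_notMem, mul_zero]
    intro hmem
    obtain ⟨a, b⟩ := hmem
    have hj' : (j:ℕ) ≠ n := fun h => hj (Fin.ext h)
    rcases lt_or_gt_of_ne hj' with h | h
    · have hle : ((j:ℕ):ℝ) + 1 ≤ (n:ℝ) := by exact_mod_cast h
      linarith
    · have hle : (n:ℝ) + 1 ≤ ((j:ℕ):ℝ) := by exact_mod_cast h
      linarith
  · intro h; exact absurd (Finset.mem_univ _) h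

set_option maxHeartbeats 2000000 in
lemma main_case (n : ℕ) (hn : n < 6) (x : ℝ)
    (h1 : (n:ℝ)/6 < x) (h2 : x < ((n:ℝ)+1)/6) :
    pwP pwPhi x = (-(1 + Real.sqrt 13) / 6) * pwPhi x := by
  have h13 : Real.sqrt 13 * Real.sqrt 13 = 13 := Real.mul_self_sqrt (by norm_num)
  interval_cases n
  · -- case n = 0
    norm_num at h1 h2
    have hdx : pwTaudot x = 2/3 :=
      (pwTaudot_eq 0 (by norm_num) (by norm_num) x (by push_cast; linarith)
        (by push_cast; linarith)).trans pv0
    have hdx1 : pwTaudot (x + 1) = 1/3 :=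
      (pwTaudot_eq 6 (by norm_num) (by norm_num) (x+1) (by push_cast; linarith)
        (by push_cast; linarith)).trans pv6
    have htx : pwTau x = 0 + 2/3 * (x - ((0:ℤ):ℝ)/6) :=
      tau_on 0 (2/3) (0) (by norm_num) (by norm_num) pv0
        (by norm_num [tv0]) x (by push_cast; linarith) (by push_cast; linarith)
    have htx1 : pwTau (x+1) = 1/2 + 1/3 * ((x+1) - ((6:ℤ):ℝ)/6) :=
      tau_on 6 (1/3) (1/2) (by norm_num) (by norm_num) pv6
        (by norm_num [tv6]) (x+1) (by push_cast; linarith) (by push_cast; linarith)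
    have hA : pwPhi (pwTau x) = 1 := by
      rw [htx]
      exact (pwPhi_eval' 0 (by norm_num) _ (by push_cast; linarith)
        (by push_cast; linarith)).trans w0
    have hB : pwPhi (pwTau (x+1)) = (-((5 + Real.sqrt 13) / 2)) := by
      rw [htx1]
      exact (pwPhi_eval' 3 (by norm_num) _ (by push_cast; linarith)
        (by push_cast; linarith)).trans w3
    have hX : pwPhi x = 1 :=
      (pwPhi_eval' 0 (by norm_num) x (by push_cast; linarith)
        (by push_cast; linarith)).trans w0
    show pwTaudot x * pwPhi (pwTau x) + pwTaudot (x + 1) * pwPhi (pwTau (x + 1)) =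
      (-(1 + Real.sqrt 13) / 6) * pwPhi x
    rw [hdx, hdx1, hA, hB, hX]
    ring
  · -- case n = 1
    norm_num at h1 h2
    have hdx : pwTaudot x = 1/3 :=
      (pwTaudot_eq 1 (by norm_num) (by norm_num) x (by push_cast; linarith)
        (by push_cast; linarith)).trans pv1
    have hdx1 : pwTaudot (x + 1) = 2/3 :=
      (pwTaudot_eq 7 (by norm_num) (by norm_num) (x+1) (by push_cast; linarith)
        (by push_cast; linarith)).trans pv7
    have htx : pwTau x = 1/9 + 1/3 * (x - ((1:ℤ):ℝ)/6) :=
      tau_on 1 (1/3) (1/9) (by norm_num) (by norm_num) pv1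
        (by norm_num [tv1]) x (by push_cast; linarith) (by push_cast; linarith)
    have htx1 : pwTau (x+1) = 5/9 + 2/3 * ((x+1) - ((7:ℤ):ℝ)/6) :=
      tau_on 7 (2/3) (5/9) (by norm_num) (by norm_num) pv7
        (by norm_num [tv7]) (x+1) (by push_cast; linarith) (by push_cast; linarith)
    have hA : pwPhi (pwTau x) = 1 := by
      rw [htx]
      exact (pwPhi_eval' 0 (by norm_num) _ (by push_cast; linarith)
        (by push_cast; linarith)).trans w0
    have hB : pwPhi (pwTau (x+1)) = (-((5 + Real.sqrt 13) / 2)) := by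
      rw [htx1]
      exact (pwPhi_eval' 3 (by norm_num) _ (by push_cast; linarith)
        (by push_cast; linarith)).trans w3
    have hX : pwPhi x = ((3 + Real.sqrt 13) / 2) :=
      (pwPhi_eval' 1 (by norm_num) x (by push_cast; linarith)
        (by push_cast; linarith)).trans w1
    show pwTaudot x * pwPhi (pwTau x) + pwTaudot (x + 1) * pwPhi (pwTau (x + 1)) =
      (-(1 + Real.sqrt 13) / 6) * pwPhi x
    rw [hdx, hdx1, hA, hB, hX]
    linear_combination (1/12 : ℝ) * h13
  · -- case n = 2
    norm_num at h1 h2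
    have hdx : pwTaudot x = 1/2 :=
      (pwTaudot_eq 2 (by norm_num) (by norm_num) x (by push_cast; linarith)
        (by push_cast; linarith)).trans pv2
    have hdx1 : pwTaudot (x + 1) = 1/2 :=
      (pwTaudot_eq 8 (by norm_num) (by norm_num) (x+1) (by push_cast; linarith)
        (by push_cast; linarith)).trans pv8
    have htx : pwTau x = 1/6 + 1/2 * (x - ((2:ℤ):ℝ)/6) :=
      tau_on 2 (1/2) (1/6) (by norm_num) (by norm_num) pv2
        (by norm_num [tv2]) x (by push_cast; linarith) (by push_cast; linarith)
    have htx1 : pwTau (x+1) = 2/3 + 1/2 * ((x+1) - ((8:ℤ):ℝ)/6) :=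
      tau_on 8 (1/2) (2/3) (by norm_num) (by norm_num) pv8
        (by norm_num [tv8]) (x+1) (by push_cast; linarith) (by push_cast; linarith)
    have hA : pwPhi (pwTau x) = ((3 + Real.sqrt 13) / 2) := by
      rw [htx]
      exact (pwPhi_eval' 1 (by norm_num) _ (by push_cast; linarith)
        (by push_cast; linarith)).trans w1
    have hB : pwPhi (pwTau (x+1)) = ((3 + Real.sqrt 13) / 2) := by
      rw [htx1]
      exact (pwPhi_eval' 4 (by norm_num) _ (by push_cast; linarith)
        (by push_cast; linarith)).trans w4
    have hX : pwPhi x = (-((5 + Real.sqrt 13) / 2)) :=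
      (pwPhi_eval' 2 (by norm_num) x (by push_cast; linarith)
        (by push_cast; linarith)).trans w2
    show pwTaudot x * pwPhi (pwTau x) + pwTaudot (x + 1) * pwPhi (pwTau (x + 1)) =
      (-(1 + Real.sqrt 13) / 6) * pwPhi x
    rw [hdx, hdx1, hA, hB, hX]
    linear_combination (-1/12 : ℝ) * h13
  · -- case n = 3
    norm_num at h1 h2
    have hdx : pwTaudot x = 1/2 :=
      (pwTaudot_eq 3 (by norm_num) (by norm_num) x (by push_cast; linarith)
        (by push_cast; linarith)).trans pv3
    have hdx1 : pwTaudot (x + 1) = 1/2 :=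
      (pwTaudot_eq 9 (by norm_num) (by norm_num) (x+1) (by push_cast; linarith)
        (by push_cast; linarith)).trans pv9
    have htx : pwTau x = 1/4 + 1/2 * (x - ((3:ℤ):ℝ)/6) :=
      tau_on 3 (1/2) (1/4) (by norm_num) (by norm_num) pv3
        (by norm_num [tv3]) x (by push_cast; linarith) (by push_cast; linarith)
    have htx1 : pwTau (x+1) = 3/4 + 1/2 * ((x+1) - ((9:ℤ):ℝ)/6) :=
      tau_on 9 (1/2) (3/4) (by norm_num) (by norm_num) pv9
        (by norm_num [tv9]) (x+1) (by push_cast; linarith) (by push_cast; linarith)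
    have hA : pwPhi (pwTau x) = ((3 + Real.sqrt 13) / 2) := by
      rw [htx]
      exact (pwPhi_eval' 1 (by norm_num) _ (by push_cast; linarith)
        (by push_cast; linarith)).trans w1
    have hB : pwPhi (pwTau (x+1)) = ((3 + Real.sqrt 13) / 2) := by
      rw [htx1]
      exact (pwPhi_eval' 4 (by norm_num) _ (by push_cast; linarith)
        (by push_cast; linarith)).trans w4
    have hX : pwPhi x = (-((5 + Real.sqrt 13) / 2)) :=
      (pwPhi_eval' 3 (by norm_num) x (by push_cast; linarith)
        (by push_cast; linarith)).trans w3
    show pwTaudot x * pwPhi (pwTau x) + pwTaudot (x + 1) * pwPhi (pwTau (x + 1)) =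
      (-(1 + Real.sqrt 13) / 6) * pwPhi x
    rw [hdx, hdx1, hA, hB, hX]
    linear_combination (-1/12 : ℝ) * h13
  · -- case n = 4
    norm_num at h1 h2
    have hdx : pwTaudot x = 2/3 :=
      (pwTaudot_eq 4 (by norm_num) (by norm_num) x (by push_cast; linarith)
        (by push_cast; linarith)).trans pv4
    have hdx1 : pwTaudot (x + 1) = 1/3 :=
      (pwTaudot_eq 10 (by norm_num) (by norm_num) (x+1) (by push_cast; linarith)
        (by push_cast; linarith)).trans pv10
    have htx : pwTau x = 1/3 + 2/3 * (x - ((4:ℤ):ℝ)/6) :=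
      tau_on 4 (2/3) (1/3) (by norm_num) (by norm_num) pv4
        (by norm_num [tv4]) x (by push_cast; linarith) (by push_cast; linarith)
    have htx1 : pwTau (x+1) = 5/6 + 1/3 * ((x+1) - ((10:ℤ):ℝ)/6) :=
      tau_on 10 (1/3) (5/6) (by norm_num) (by norm_num) pv10
        (by norm_num [tv10]) (x+1) (by push_cast; linarith) (by push_cast; linarith)
    have hA : pwPhi (pwTau x) = (-((5 + Real.sqrt 13) / 2)) := by
      rw [htx]
      exact (pwPhi_eval' 2 (by norm_num) _ (by push_cast; linarith)
        (by push_cast; linarith)).trans w2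
    have hB : pwPhi (pwTau (x+1)) = 1 := by
      rw [htx1]
      exact (pwPhi_eval' 5 (by norm_num) _ (by push_cast; linarith)
        (by push_cast; linarith)).trans w5
    have hX : pwPhi x = ((3 + Real.sqrt 13) / 2) :=
      (pwPhi_eval' 4 (by norm_num) x (by push_cast; linarith)
        (by push_cast; linarith)).trans w4
    show pwTaudot x * pwPhi (pwTau x) + pwTaudot (x + 1) * pwPhi (pwTau (x + 1)) =
      (-(1 + Real.sqrt 13) / 6) * pwPhi x
    rw [hdx, hdx1, hA, hB, hX]
    linear_combination (1/12 : ℝ) * h13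
  · -- case n = 5
    norm_num at h1 h2
    have hdx : pwTaudot x = 1/3 :=
      (pwTaudot_eq 5 (by norm_num) (by norm_num) x (by push_cast; linarith)
        (by push_cast; linarith)).trans pv5
    have hdx1 : pwTaudot (x + 1) = 2/3 :=
      (pwTaudot_eq 11 (by norm_num) (by norm_num) (x+1) (by push_cast; linarith)
        (by push_cast; linarith)).trans pv11
    have htx : pwTau x = 4/9 + 1/3 * (x - ((5:ℤ):ℝ)/6) :=
      tau_on 5 (1/3) (4/9) (by norm_num) (by norm_num) pv5
        (by norm_num [tv5]) x (by push_cast; linarith) (by push_cast; linarith)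
    have htx1 : pwTau (x+1) = 8/9 + 2/3 * ((x+1) - ((11:ℤ):ℝ)/6) :=
      tau_on 11 (2/3) (8/9) (by norm_num) (by norm_num) pv11
        (by norm_num [tv11]) (x+1) (by push_cast; linarith) (by push_cast; linarith)
    have hA : pwPhi (pwTau x) = (-((5 + Real.sqrt 13) / 2)) := by
      rw [htx]
      exact (pwPhi_eval' 2 (by norm_num) _ (by push_cast; linarith)
        (by push_cast; linarith)).trans w2
    have hB : pwPhi (pwTau (x+1)) = 1 := by
      rw [htx1]
      exact (pwPhi_eval' 5 (by norm_num) _ (by push_cast; linarith)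
        (by push_cast; linarith)).trans w5
    have hX : pwPhi x = 1 :=
      (pwPhi_eval' 5 (by norm_num) x (by push_cast; linarith)
        (by push_cast; linarith)).trans w5
    show pwTaudot x * pwPhi (pwTau x) + pwTaudot (x + 1) * pwPhi (pwTau (x + 1)) =
      (-(1 + Real.sqrt 13) / 6) * pwPhi x
    rw [hdx, hdx1, hA, hB, hX]
    ring

/-- `Pφ(x) = λ₂·φ(x)` for every `x ∈ [0,1) ∖ (C ∪ S')`, where `λ₂ = −(1+√13)/6`. -/
theorem stmt15 (x : ℝ) (hx : x ∈ Ico (0:ℝ) 1 \ (Cset ∪ Sprime)) :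
    pwP pwPhi x = (-(1 + Real.sqrt 13) / 6) * pwPhi x := by
  obtain ⟨⟨hx0, hxlt⟩, hx2⟩ := hx
  have hC : x ∉ Cset := fun h => hx2 (Or.inl h)
  simp only [Cset, Set.mem_insert_iff, Set.mem_singleton_iff, not_or] at hC
  obtain ⟨c0, c1, c2, c3, c4, c5⟩ := hC
  rcases lt_or_ge x (1/6) with h | h
  · exact main_case 0 (by norm_num) x
      (by push_cast; have := lt_of_le_of_ne hx0 (Ne.symm c0); linarith)
      (by push_cast; linarith)
  rcases lt_or_ge x (2/6) with h' | h'
  · exact main_case 1 (by norm_num) x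
      (by push_cast; have := lt_of_le_of_ne h (Ne.symm c1); linarith)
      (by push_cast; linarith)
  rcases lt_or_ge x (3/6) with h'' | h''
  · exact main_case 2 (by norm_num) x
      (by push_cast; have := lt_of_le_of_ne h' (Ne.symm c2); linarith)
      (by push_cast; linarith)
  rcases lt_or_ge x (4/6) with h3 | h3
  · exact main_case 3 (by norm_num) x
      (by push_cast; have := lt_of_le_of_ne h'' (Ne.symm c3); linarith)
      (by push_cast; linarith)
  rcases lt_or_ge x (5/6) with h4 | h4
  · exact main_case 4 (by norm_num) x
      (by push_cast; have := lt_of_le_of_ne h3 (Ne.symm c4); linarith)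
      (by push_cast; linarith)
  · exact main_case 5 (by norm_num) x
      (by push_cast; have := lt_of_le_of_ne h4 (Ne.symm c5); linarith)
      (by push_cast; linarith)
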